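/- arXiv:1011.5210 — 7 statements merged into one kernel-verified Lean document; each statement's English description precedes it below -/
import Mathlib

section
/- Let n ≥ 1 and let A be a self-adjoint n×n complex matrix with Tr A = 0 such that I + A is positive semidefinite. If Tr(A²) = n² − n, then I + A = nP for some orthogonal projection P of rank one (P = P* = P², Tr P = 1). -/
open Matrix ComplexOrder

/-- Equality part of Lemma 1: if `A` is a self-adjoint traceless `n × n` complex matrix,
`I + A` is positive semidefinite and `Tr(A²) = n² - n`, then `I + A = n • P` for some
rank-one orthogonal projection `P`. -/
theorem one_add_eq_smul_projection_of_trace_sq_eq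
    (n : ℕ) (hn : 1 ≤ n) (A : Matrix (Fin n) (Fin n) ℂ)
    (hA : A.IsHermitian) (htr : A.trace = 0)
    (hpos : (1 + A).PosSemidef)
    (heq : (A * A).trace = ((n ^ 2 - n : ℝ) : ℂ)) :
    ∃ P : Matrix (Fin n) (Fin n) ℂ,
      Pᴴ = P ∧ P * P = P ∧ P.trace = 1 ∧ 1 + A = (n : ℂ) • P := by
  have hB : (1 + A).IsHermitian := hpos.isHermitian
  set U : Matrix (Fin n) (Fin n) ℂ := (hB.eigenvectorUnitary : Matrix (Fin n) (Fin n) ℂ) with hUdef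
  have hUU : star U * U = 1 := (Matrix.mem_unitaryGroup_iff').mp hB.eigenvectorUnitary.2
  set μ : Fin n → ℝ := hB.eigenvalues with hμdef
  have hspec : 1 + A = U * diagonal (RCLike.ofReal ∘ μ) * star U := hB.spectral_theorem
  have hμ0 : ∀ i, 0 ≤ μ i := hpos.eigenvalues_nonneg
  have htrconjM : ∀ M : Matrix (Fin n) (Fin n) ℂ, (U * M * star U).trace = M.trace := by
    intro M
    rw [Matrix.trace_mul_cycle, hUU, Matrix.one_mul]
  have htrconj : ∀ d : Fin n → ℂ, (U * diagonal d * star U).trace = ∑ i, d i := by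
    intro d
    rw [htrconjM, Matrix.trace_diagonal]
  have key : ∀ M N : Matrix (Fin n) (Fin n) ℂ,
      (U * M * star U) * (U * N * star U) = U * (M * N) * star U := by
    intro M N
    calc (U * M * star U) * (U * N * star U)
        = U * (M * ((star U * U) * (N * star U))) := by simp only [Matrix.mul_assoc]
      _ = U * (M * N) * star U := by rw [hUU, Matrix.one_mul]; simp only [Matrix.mul_assoc]
  -- sum of eigenvalues is n
  have htrB : (1 + A).trace = (n : ℂ) := by
    simp [Matrix.trace_add, htr, Matrix.trace_one]
  have hsum : ∑ i, μ i = n := by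
    have h1 : ((∑ i, μ i : ℝ) : ℂ) = (n : ℂ) := by
      rw [← htrB, hspec, htrconj]
      push_cast
      simp
    exact_mod_cast h1
  -- sum of squares is n²
  have hsq : ∑ i, μ i ^ 2 = (n : ℝ) ^ 2 := by
    have hBB : (1 + A) * (1 + A)
        = U * (diagonal (RCLike.ofReal ∘ μ) * diagonal (RCLike.ofReal ∘ μ)) * star U := by
      rw [hspec, key]
    have htrBB : ((1 + A) * (1 + A)).trace = (n : ℂ) ^ 2 := by
      have hexp : (1 + A) * (1 + A) = 1 + A + A + A * A := by noncomm_ring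
      rw [hexp]
      simp only [Matrix.trace_add, htr, Matrix.trace_one, heq, Fintype.card_fin]
      push_cast
      ring
    have h1 : ((∑ i, μ i ^ 2 : ℝ) : ℂ) = (n : ℂ) ^ 2 := by
      rw [← htrBB, hBB, htrconjM, Matrix.diagonal_mul_diagonal, Matrix.trace_diagonal]
      push_cast
      simp [sq]
    exact_mod_cast h1
  -- off-diagonal products vanish
  have hoff : ∀ i j, i ≠ j → μ i * μ j = 0 := by
    intro i j hij
    by_contra h
    have hpos' : 0 < μ i * μ j := lt_of_le_of_ne (mul_nonneg (hμ0 i) (hμ0 j)) (Ne.symm h)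
    have hexp : (∑ i, μ i) ^ 2 = ∑ i, ∑ j, μ i * μ j := by
      rw [sq, Finset.sum_mul_sum]
    have hge : ∑ k, ∑ l, μ k * μ l ≥ (∑ k, μ k ^ 2) + μ i * μ j := by
      have h1 : ∀ k, ∑ l, μ k * μ l ≥ μ k ^ 2 + (if k = i then μ i * μ j else 0) := by
        intro k
        by_cases hk : k = i
        · subst hk
          rw [if_pos rfl]
          have hsub : ({k, j} : Finset (Fin n)).sum (fun l => μ k * μ l) ≤ ∑ l, μ k * μ l := by
            apply Finset.sum_le_sum_of_subset_of_nonneg (Finset.subset_univ _)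
            intro l _ _
            exact mul_nonneg (hμ0 k) (hμ0 l)
          rw [Finset.sum_pair hij] at hsub
          have h2 : μ k ^ 2 = μ k * μ k := sq (μ k)
          linarith
        · simp only [if_neg hk, add_zero]
          calc μ k ^ 2 = ({k} : Finset (Fin n)).sum (fun l => μ k * μ l) := by simp [sq]
            _ ≤ ∑ l, μ k * μ l := Finset.sum_le_sum_of_subset_of_nonneg (Finset.subset_univ _)
                (fun l _ _ => mul_nonneg (hμ0 k) (hμ0 l))
      calc ∑ k, ∑ l, μ k * μ l ≥ ∑ k, (μ k ^ 2 + (if k = i then μ i * μ j else 0)) :=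
            Finset.sum_le_sum (fun k _ => h1 k)
        _ = (∑ k, μ k ^ 2) + μ i * μ j := by
            rw [Finset.sum_add_distrib, Finset.sum_ite_eq' Finset.univ i (fun _ => μ i * μ j)]
            simp
    rw [← hexp, hsum, hsq] at hge
    linarith
  -- exactly one positive eigenvalue
  have hex : ∃ i₀, 0 < μ i₀ := by
    by_contra h
    push_neg at h
    have h0 : ∑ i, μ i = 0 := Finset.sum_eq_zero (fun i _ => le_antisymm (h i) (hμ0 i))
    rw [hsum] at h0
    have : (0 : ℝ) < n := by exact_mod_cast hn
    linarith
  obtain ⟨i₀, hi₀⟩ := hex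
  have hzero : ∀ j, j ≠ i₀ → μ j = 0 := by
    intro j hj
    rcases mul_eq_zero.mp (hoff i₀ j (Ne.symm hj)) with h | h
    · exact absurd h (ne_of_gt hi₀)
    · exact h
  have hval : μ i₀ = n := by
    have h0 : ∑ i, μ i = μ i₀ := by
      rw [Finset.sum_eq_single i₀ (fun j _ hj => hzero j hj) (by simp)]
    rw [← h0, hsum]
  -- build the projection
  set d : Fin n → ℂ := fun i => if i = i₀ then 1 else 0 with hd
  have hdstar : star d = d := by
    funext i
    simp [hd, Pi.star_apply, apply_ite]
  have hdd : diagonal d * diagonal d = diagonal d := by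
    have hmul : (fun i => d i * d i) = d := by
      funext i
      by_cases hi : i = i₀ <;> simp [hd, hi]
    rw [Matrix.diagonal_mul_diagonal, hmul]
  refine ⟨U * diagonal d * star U, ?_, ?_, ?_, ?_⟩
  · simp [Matrix.conjTranspose_mul, Matrix.diagonal_conjTranspose, hdstar,
      Matrix.star_eq_conjTranspose, Matrix.mul_assoc]
  · rw [key, hdd]
  · rw [htrconj]
    simp [hd]
  · have hfun : (RCLike.ofReal ∘ μ : Fin n → ℂ) = (n : ℂ) • d := by
      funext i
      by_cases hi : i = i₀
      · subst hi
        simp [hd, hval]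
      · simp [hd, hi, hzero i hi]
    rw [hspec, hfun, Matrix.diagonal_smul, Matrix.mul_smul, Matrix.smul_mul]
end

section
/- Let a₁, a₂, a₃, b₁, b₂, b₃, θ₃, c be real numbers with a₁² + a₂² + a₃² ≤ 1, b₁² + b₂² + b₃² ≤ 1, θ₃² ≤ 1 and 0 ≤ c ≤ 1 − θ₃². Then (1 + θ₃ a₃)(1 + θ₃ b₃) + c·(a₁ b₁ + a₂ b₂) ≥ 0. -/
set_option maxHeartbeats 1000000

theorem section6_aux
    (a₁ a₂ a₃ b₁ b₂ b₃ θ₃ c p q t : ℝ)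
    (ha : a₁ ^ 2 + a₂ ^ 2 + a₃ ^ 2 ≤ 1)
    (hb : b₁ ^ 2 + b₂ ^ 2 + b₃ ^ 2 ≤ 1)
    (hθ : θ₃ ^ 2 ≤ 1)
    (hc0 : 0 ≤ c) (hc1 : c ≤ 1 - θ₃ ^ 2)
    (hp0 : 0 ≤ p) (hq0 : 0 ≤ q) (ht0 : 0 ≤ t)
    (hp2 : p ^ 2 = a₁ ^ 2 + a₂ ^ 2)
    (hq2 : q ^ 2 = b₁ ^ 2 + b₂ ^ 2)
    (ht2 : t ^ 2 = 1 - θ₃ ^ 2) :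
    0 ≤ (1 + θ₃ * a₃) * (1 + θ₃ * b₃) + c * (a₁ * b₁ + a₂ * b₂) := by
  have hsq : (a₁ * b₁ + a₂ * b₂) ^ 2 ≤ (p * q) ^ 2 := by
    nlinarith [sq_nonneg (a₁ * b₂ - a₂ * b₁)]
  have hdot : -(p * q) ≤ a₁ * b₁ + a₂ * b₂ := by
    nlinarith [hsq, mul_nonneg hp0 hq0]
  have hna : 0 ≤ 1 + θ₃ * a₃ := by
    nlinarith [sq_nonneg (θ₃ + a₃), sq_nonneg a₁, sq_nonneg a₂]
  have hnb : 0 ≤ 1 + θ₃ * b₃ := by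
    nlinarith [sq_nonneg (θ₃ + b₃), sq_nonneg b₁, sq_nonneg b₂]
  have h1 : t * p ≤ 1 + θ₃ * a₃ := by
    have hple : p ^ 2 ≤ 1 - a₃ ^ 2 := by nlinarith
    have hm : (1 - θ₃ ^ 2) * p ^ 2 ≤ (1 - θ₃ ^ 2) * (1 - a₃ ^ 2) :=
      mul_le_mul_of_nonneg_left hple (by linarith)
    have h1a : (t * p) ^ 2 ≤ (1 + θ₃ * a₃) ^ 2 := by nlinarith [sq_nonneg (θ₃ + a₃)]
    exact (pow_le_pow_iff_left₀ (mul_nonneg ht0 hp0) hna two_ne_zero).mp h1a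
  have h2 : t * q ≤ 1 + θ₃ * b₃ := by
    have hqle : q ^ 2 ≤ 1 - b₃ ^ 2 := by nlinarith
    have hm : (1 - θ₃ ^ 2) * q ^ 2 ≤ (1 - θ₃ ^ 2) * (1 - b₃ ^ 2) :=
      mul_le_mul_of_nonneg_left hqle (by linarith)
    have h2a : (t * q) ^ 2 ≤ (1 + θ₃ * b₃) ^ 2 := by nlinarith [sq_nonneg (θ₃ + b₃)]
    exact (pow_le_pow_iff_left₀ (mul_nonneg ht0 hq0) hnb two_ne_zero).mp h2a
  have hmul : t * p * (t * q) ≤ (1 + θ₃ * a₃) * (1 + θ₃ * b₃) :=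
    mul_le_mul h1 h2 (mul_nonneg ht0 hq0) hna
  have hcpq : c * (p * q) ≤ t * p * (t * q) := by
    nlinarith [mul_nonneg hp0 hq0]
  have hfin : c * (-(p * q)) ≤ c * (a₁ * b₁ + a₂ * b₂) :=
    mul_le_mul_of_nonneg_left hdot hc0
  nlinarith [hmul, hcpq, hfin]

/-- The Lemma of Section 6: `(1 + θ₃a₃)(1 + θ₃b₃) + c(a₁b₁ + a₂b₂) ≥ 0` for Bloch
vectors of norm at most 1, `θ₃² ≤ 1` and `0 ≤ c ≤ 1 - θ₃²`. -/
theorem section6_lemma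
    (a₁ a₂ a₃ b₁ b₂ b₃ θ₃ c : ℝ)
    (ha : a₁ ^ 2 + a₂ ^ 2 + a₃ ^ 2 ≤ 1)
    (hb : b₁ ^ 2 + b₂ ^ 2 + b₃ ^ 2 ≤ 1)
    (hθ : θ₃ ^ 2 ≤ 1)
    (hc0 : 0 ≤ c) (hc1 : c ≤ 1 - θ₃ ^ 2) :
    0 ≤ (1 + θ₃ * a₃) * (1 + θ₃ * b₃) + c * (a₁ * b₁ + a₂ * b₂) :=
  section6_aux a₁ a₂ a₃ b₁ b₂ b₃ θ₃ c _ _ _ ha hb hθ hc0 hc1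
    (Real.sqrt_nonneg _) (Real.sqrt_nonneg _) (Real.sqrt_nonneg _)
    (Real.sq_sqrt (by positivity)) (Real.sq_sqrt (by positivity))
    (Real.sq_sqrt (by linarith))
end

section
/- Let a, b, θ be real numbers with |a| ≤ 1, |b| ≤ 1 and |θ| ≤ 1. Then (1 + θa)(1 + θb) ≥ (1 − θ²)·√(1 − a²)·√(1 − b²). -/
/-- Key inequality inside the proof of the Lemma of Section 6:
`(1 + θa)(1 + θb) ≥ (1 - θ²)·√(1 - a²)·√(1 - b²)` for `|a|, |b|, |θ| ≤ 1`. -/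
theorem section6_key_inequality
    (a b θ : ℝ) (ha : |a| ≤ 1) (hb : |b| ≤ 1) (hθ : |θ| ≤ 1) :
    (1 - θ ^ 2) * Real.sqrt (1 - a ^ 2) * Real.sqrt (1 - b ^ 2) ≤
      (1 + θ * a) * (1 + θ * b) := by
  have hθ2 : (0:ℝ) ≤ 1 - θ ^ 2 := by nlinarith [abs_nonneg θ, sq_abs θ]
  have key : ∀ x : ℝ, |x| ≤ 1 →
      Real.sqrt (1 - θ ^ 2) * Real.sqrt (1 - x ^ 2) ≤ 1 + θ * x := by
    intro x hx
    have hx2 : (0:ℝ) ≤ 1 - x ^ 2 := by nlinarith [abs_nonneg x, sq_abs x]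
    have hpos : 0 ≤ 1 + θ * x := by
      nlinarith [abs_mul θ x, abs_nonneg (θ * x), neg_abs_le (θ * x),
        mul_le_one₀ hθ (abs_nonneg x) hx]
    have : Real.sqrt (1 - θ ^ 2) * Real.sqrt (1 - x ^ 2)
        = Real.sqrt ((1 - θ ^ 2) * (1 - x ^ 2)) := (Real.sqrt_mul hθ2 _).symm
    rw [this]
    have hle : (1 - θ ^ 2) * (1 - x ^ 2) ≤ (1 + θ * x) ^ 2 := by nlinarith [sq_nonneg (θ + x)]
    calc Real.sqrt ((1 - θ ^ 2) * (1 - x ^ 2)) ≤ Real.sqrt ((1 + θ * x) ^ 2) :=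
          Real.sqrt_le_sqrt hle
      _ = 1 + θ * x := Real.sqrt_sq hpos
  have ha' := key a ha
  have hb' := key b hb
  have hsq : Real.sqrt (1 - θ ^ 2) * Real.sqrt (1 - θ ^ 2) = 1 - θ ^ 2 :=
    Real.mul_self_sqrt hθ2
  have h1 : 0 ≤ Real.sqrt (1 - θ ^ 2) * Real.sqrt (1 - a ^ 2) :=
    mul_nonneg (Real.sqrt_nonneg _) (Real.sqrt_nonneg _)
  have h2 : 0 ≤ Real.sqrt (1 - θ ^ 2) * Real.sqrt (1 - b ^ 2) :=
    mul_nonneg (Real.sqrt_nonneg _) (Real.sqrt_nonneg _)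
  calc (1 - θ ^ 2) * Real.sqrt (1 - a ^ 2) * Real.sqrt (1 - b ^ 2)
      = (Real.sqrt (1 - θ ^ 2) * Real.sqrt (1 - a ^ 2)) *
        (Real.sqrt (1 - θ ^ 2) * Real.sqrt (1 - b ^ 2)) := by
        linear_combination -(Real.sqrt (1 - a ^ 2) * Real.sqrt (1 - b ^ 2)) * hsq
    _ ≤ (1 + θ * a) * (1 + θ * b) := mul_le_mul ha' hb' h2 (le_trans h1 ha')
end

section
/- Let a = (a₁, a₂, a₃) and b = (b₁, b₂, b₃) be vectors in ℝ³ with ‖a‖ ≤ 1, ‖b‖ ≤ 1 and ‖a + b‖ ≤ 1. Then (a₁² + a₂²)(b₁² + b₂²) − (a₁ b₁ + a₂ b₂)² ≤ 3/4. -/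
lemma aux_B_bound (x y t : ℝ) (hx0 : 0 ≤ x) (hy0 : 0 ≤ y)
    (hx1 : x ≤ 1) (hy1 : y ≤ 1) (hs : x + y + 2 * t ≤ 1)
    (hcs : t ^ 2 ≤ x * y) : x * y - t ^ 2 ≤ 3 / 4 := by
  rcases le_or_gt (x + y) 1 with h | h
  · nlinarith [sq_nonneg (x - y), sq_nonneg t]
  · have h2t : x + y - 1 ≤ -2 * t := by linarith
    have ht2 : (x + y - 1) ^ 2 ≤ 4 * t ^ 2 := by nlinarith
    nlinarith [sq_nonneg (x - y)]

/-- Section 6: for vectors `a, b ∈ ℝ³` with Euclidean norms `‖a‖ ≤ 1`, `‖b‖ ≤ 1`,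
`‖a + b‖ ≤ 1`, the quantity `B = (a₁² + a₂²)(b₁² + b₂²) - (a₁b₁ + a₂b₂)²` is at most
`3/4`. -/
theorem section6_B_le_three_quarters
    (a₁ a₂ a₃ b₁ b₂ b₃ : ℝ)
    (ha : a₁ ^ 2 + a₂ ^ 2 + a₃ ^ 2 ≤ 1)
    (hb : b₁ ^ 2 + b₂ ^ 2 + b₃ ^ 2 ≤ 1)
    (hab : (a₁ + b₁) ^ 2 + (a₂ + b₂) ^ 2 + (a₃ + b₃) ^ 2 ≤ 1) :
    (a₁ ^ 2 + a₂ ^ 2) * (b₁ ^ 2 + b₂ ^ 2) - (a₁ * b₁ + a₂ * b₂) ^ 2 ≤ 3 / 4 := by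
  apply aux_B_bound
  · positivity
  · positivity
  · nlinarith [sq_nonneg a₃]
  · nlinarith [sq_nonneg b₃]
  · nlinarith [sq_nonneg (a₃ + b₃)]
  · nlinarith [sq_nonneg (a₁ * b₂ - a₂ * b₁)]
end

section
/- There exist three orthogonal projections P₁, P₂, P₃ of rank one in M₂(ℂ) such that P₁ + P₂ + P₃ = (3/2)·I, Tr(σ₃ P_i) = 0 for i = 1, 2, 3, and Tr(P_i P_j) = 1/4 for all i ≠ j, where σ₃ is the Pauli matrix diag(1, −1). -/
open Matrix

noncomputable def csic_s : ℂ := Real.sqrt 3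

lemma csic_s_sq : csic_s * csic_s = 3 := by
  have h : (Real.sqrt 3) * (Real.sqrt 3) = 3 := Real.mul_self_sqrt (by norm_num)
  rw [csic_s, ← Complex.ofReal_mul, h]
  norm_num

noncomputable def csic_a : ℂ := (-1 + csic_s * Complex.I) / 2
noncomputable def csic_b : ℂ := (-1 - csic_s * Complex.I) / 2

lemma csic_conj_s : (starRingEnd ℂ) csic_s = csic_s := by
  simp [csic_s]

lemma csic_conj_a : (starRingEnd ℂ) csic_a = csic_b := by
  rw [csic_a, csic_b, map_div₀, map_add, map_neg, _root_.map_one, _root_.map_mul,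
    csic_conj_s, Complex.conj_I, map_ofNat]
  ring

lemma csic_conj_b : (starRingEnd ℂ) csic_b = csic_a := by
  rw [csic_a, csic_b, map_div₀, map_sub, map_neg, _root_.map_one, _root_.map_mul,
    csic_conj_s, Complex.conj_I, map_ofNat]
  ring

lemma csic_ab : csic_a * csic_b = 1 := by
  simp only [csic_a, csic_b]
  linear_combination (-(Complex.I * Complex.I) / 4) * csic_s_sq
    + (-3 / 4 : ℂ) * Complex.I_mul_I

lemma csic_add : csic_a + csic_b = -1 := by
  simp only [csic_a, csic_b]; ring

lemma csic_aa : csic_a * csic_a = csic_b := by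
  simp only [csic_a, csic_b]
  linear_combination ((Complex.I * Complex.I) / 4) * csic_s_sq
    + (3 / 4 : ℂ) * Complex.I_mul_I

lemma csic_bb : csic_b * csic_b = csic_a := by
  simp only [csic_a, csic_b]
  linear_combination ((Complex.I * Complex.I) / 4) * csic_s_sq
    + (3 / 4 : ℂ) * Complex.I_mul_I

noncomputable def csic_P : Fin 3 → Matrix (Fin 2) (Fin 2) ℂ
  | 0 => !![1/2, 1/2; 1/2, 1/2]
  | 1 => !![1/2, csic_a/2; csic_b/2, 1/2]
  | 2 => !![1/2, csic_b/2; csic_a/2, 1/2]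

/-- Existence content of Theorem 3: there are three rank-one orthogonal projections in
`M₂(ℂ)` summing to `(3/2)·I`, quasi-orthogonal to `σ₃ = diag(1, -1)`, with pairwise
overlaps `1/4`. -/
theorem exists_conditional_sic_qubit :
    ∃ P : Fin 3 → Matrix (Fin 2) (Fin 2) ℂ,
      (∀ i, (P i)ᴴ = P i) ∧ (∀ i, P i * P i = P i) ∧ (∀ i, (P i).trace = 1) ∧
      (∑ i, P i = (3 / 2 : ℂ) • 1) ∧
      (∀ i, ((!![1, 0; 0, -1] : Matrix (Fin 2) (Fin 2) ℂ) * P i).trace = 0) ∧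
      (∀ i j, i ≠ j → (P i * P j).trace = 1 / 4) := by
  refine ⟨csic_P, ?_, ?_, ?_, ?_, ?_, ?_⟩
  · intro i
    fin_cases i <;>
      · ext i j
        fin_cases i <;> fin_cases j <;>
          simp [csic_P, conjTranspose_apply, map_div₀, csic_conj_a, csic_conj_b]
  · intro i
    fin_cases i <;>
      · ext i j
        fin_cases i <;> fin_cases j <;>
          · simp [csic_P, Matrix.mul_apply, Fin.sum_univ_two]
            first
            | ring1
            | linear_combination csic_ab / 4
  · intro i
    fin_cases i <;> simp [csic_P, Matrix.trace_fin_two] <;> ring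
  · ext i j
    fin_cases i <;> fin_cases j <;>
      · simp [csic_P, Fin.sum_univ_three, Matrix.one_apply]
        first
        | linear_combination csic_add / 2
        | norm_num
  · intro i
    fin_cases i <;>
      · simp only [csic_P]
        rw [Matrix.mul_fin_two, Matrix.trace_fin_two_of]
        ring1
  · intro i j hij
    fin_cases i <;> fin_cases j <;>
      first
      | exact absurd rfl hij
      | (simp only [csic_P]
         rw [Matrix.mul_fin_two, Matrix.trace_fin_two_of]
         first
         | linear_combination csic_add / 4
         | linear_combination csic_aa / 4 + csic_bb / 4 + csic_add / 4)
end

section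
/- Let θ = (θ₁, θ₂, θ₃) ∈ ℝ³ with θ₁² + θ₂² + θ₃² ≤ 1 and let λ = (λ₁, λ₂, λ₃) ∈ ℝ³ with λ₁² + λ₂² + λ₃² = 1 and λ₃ ≠ 0. Then (1/2)·[(1 − (λ₁θ₁ + λ₂θ₂ + λ₃θ₃)²) + (1 − (λ₁θ₁ + λ₂θ₂ − λ₃θ₃)²)]/λ₃² ≥ 1 − θ₃², and equality holds for λ = (0, 0, 1) and λ = (0, 0, −1). -/
/-- Section 3: the average variance of the natural unbiased estimator of `θ₃` is at
least `1 - θ₃²`, with equality for `λ = (0,0,1)` and `λ = (0,0,-1)`. -/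
theorem average_variance_ge
    (θ₁ θ₂ θ₃ : ℝ) (hθ : θ₁ ^ 2 + θ₂ ^ 2 + θ₃ ^ 2 ≤ 1)
    (l₁ l₂ l₃ : ℝ) (hl : l₁ ^ 2 + l₂ ^ 2 + l₃ ^ 2 = 1) (hl₃ : l₃ ≠ 0) :
    1 - θ₃ ^ 2 ≤
      (1 / 2) * ((1 - (l₁ * θ₁ + l₂ * θ₂ + l₃ * θ₃) ^ 2) +
        (1 - (l₁ * θ₁ + l₂ * θ₂ - l₃ * θ₃) ^ 2)) / l₃ ^ 2 ∧
    ((l₁ = 0 ∧ l₂ = 0 ∧ (l₃ = 1 ∨ l₃ = -1)) →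
      (1 / 2) * ((1 - (l₁ * θ₁ + l₂ * θ₂ + l₃ * θ₃) ^ 2) +
        (1 - (l₁ * θ₁ + l₂ * θ₂ - l₃ * θ₃) ^ 2)) / l₃ ^ 2 = 1 - θ₃ ^ 2) := by
  have h3 : (0:ℝ) < l₃ ^ 2 := by positivity
  constructor
  · rw [le_div_iff₀ h3]
    nlinarith [sq_nonneg (l₁ * θ₂ - l₂ * θ₁), sq_nonneg (l₁ * θ₁ + l₂ * θ₂),
      sq_nonneg θ₃, mul_nonneg h3.le (sq_nonneg θ₃)]
  · rintro ⟨rfl, rfl, h | h⟩ <;> subst h <;> ring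
end

section
/- Let n ≥ 2 be a natural number and let α be a real number with 0 ≤ α ≤ 1. Let x, y be real numbers satisfying x − y > 0, x + (n² − 2)·y > 0, x ≤ n² − n, and (n² − 1)·(x + (n² − 2)·y) ≤ n² − n. Then (n²/(x − y) − α)^{n² − 2} · (1/(x + (n² − 2)·y) − α) ≥ ((n+1)/n − α)^{n² − 1}, with equality at x = n² − n, y = −(n² − n)/(n² − 1). -/
noncomputable def Dp (r : ℝ) : ℝ := r^10-2*r^9-3*r^8+8*r^7-8*r^5+3*r^4+2*r^3-r^2
noncomputable def Bp (r : ℝ) : ℝ := -r^10+r^9+6*r^8-8*r^7-7*r^6+13*r^5-6*r^3+2*r^2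
noncomputable def discp (r : ℝ) : ℝ :=
  4*r^21 - 17*r^20 - 6*r^19 + 119*r^18 - 100*r^17 - 306*r^16 + 468*r^15 + 306*r^14
  - 876*r^13 + 51*r^12 + 810*r^11 - 357*r^10 - 340*r^9 + 272*r^8 + 24*r^7 - 68*r^6 + 16*r^5

lemma Dp_pos {r : ℝ} (hr : 2 ≤ r) : 0 < Dp r := by
  have ht : (0:ℝ) ≤ r - 2 := by linarith
  have h : Dp r = 60 + 500*(r-2)^1 + 1747*(r-2)^2 + 3418*(r-2)^3 + 4179*(r-2)^4
      + 3352*(r-2)^5 + 1792*(r-2)^6 + 632*(r-2)^7 + 141*(r-2)^8 + 18*(r-2)^9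
      + 1*(r-2)^10 := by unfold Dp; ring
  rw [h]
  have := pow_nonneg ht
  nlinarith [this 1, this 2, this 3, this 4, this 5, this 6, this 7, this 8, this 9, this 10]

lemma discp_nonneg {r : ℝ} (hr : 2 ≤ r) : 0 ≤ discp r := by
  have ht : (0:ℝ) ≤ r - 2 := by linarith
  have h : discp r = 20736 + 359424*(r-2)^1 + 2887488*(r-2)^2 + 14321280*(r-2)^3
      + 49258096*(r-2)^4 + 125065408*(r-2)^5 + 243532396*(r-2)^6 + 372898392*(r-2)^7
      + 456603012*(r-2)^8 + 452137152*(r-2)^9 + 364612911*(r-2)^10 + 240313170*(r-2)^11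
      + 129512499*(r-2)^12 + 56923868*(r-2)^13 + 20281610*(r-2)^14 + 5798420*(r-2)^15
      + 1309442*(r-2)^16 + 228080*(r-2)^17 + 29531*(r-2)^18 + 2674*(r-2)^19
      + 151*(r-2)^20 + 4*(r-2)^21 := by unfold discp; ring
  rw [h]
  have := pow_nonneg ht
  nlinarith [this 1, this 2, this 3, this 4, this 5, this 6, this 7, this 8, this 9, this 10,
    this 11, this 12, this 13, this 14, this 15, this 16, this 17, this 18, this 19, this 20, this 21]

lemma keyP {r σ α : ℝ} (hr : 2 ≤ r) (hα0 : 0 ≤ α) (hα1 : α ≤ 1) (hσ : 0 ≤ σ)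
    (hs : (r^2-1)*σ ≤ r^2 - r) :
    r^2*(r^2-2)*((r^2-1)*σ - (r^2-1)*(r^2-r))
      + α*(((r^2-1)*(r^2-r) - σ)^2 - r^2*(r^2-2)^2*σ^2) ≤ 0 := by
  have h2r : (0:ℝ) < r^2 - r := by nlinarith
  have h21 : (0:ℝ) < r^2 - 1 := by nlinarith
  have hf1 : (0:ℝ) ≤ r^2*(r^2-2) := by nlinarith
  have hf2 : (r^2-1)*σ - (r^2-1)*(r^2-r) ≤ 0 := by nlinarith
  have hfirst : r^2*(r^2-2)*((r^2-1)*σ - (r^2-1)*(r^2-r)) ≤ 0 := by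
    nlinarith [mul_nonneg hf1 (neg_nonneg.2 hf2)]
  rcases le_or_gt (((r^2-1)*(r^2-r) - σ)^2 - r^2*(r^2-2)^2*σ^2) 0 with hR | hR
  · nlinarith
  · have hP1 : r^2*(r^2-2)*((r^2-1)*σ - (r^2-1)*(r^2-r))
        + (((r^2-1)*(r^2-r) - σ)^2 - r^2*(r^2-2)^2*σ^2) ≤ 0 := by
      have hid : 4*(Dp r)*(r^2-r)^2*(r^2-1)^2 *
          (-(r^2*(r^2-2)*((r^2-1)*σ - (r^2-1)*(r^2-r))
            + (((r^2-1)*(r^2-r) - σ)^2 - r^2*(r^2-2)^2*σ^2)))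
          = (2*(Dp r)*(r^2-1)*σ + (Bp r)*(r^2-r))^2 + (discp r)*(r^2-r)^2 := by
        unfold Dp Bp discp; ring
      have hD := Dp_pos hr
      have hdisc := discp_nonneg hr
      have hc : 0 < 4*(Dp r)*(r^2-r)^2*(r^2-1)^2 := by positivity
      nlinarith [sq_nonneg (2*(Dp r)*(r^2-1)*σ + (Bp r)*(r^2-r)),
        mul_nonneg hdisc (sq_nonneg (r^2-r))]
    nlinarith

lemma hasDerivG (q α C : ℝ) (K : ℕ) (σ : ℝ) (h1 : σ ≠ 0) (h2 : C - σ ≠ 0) :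
    HasDerivAt (fun t : ℝ => (q/(C - t) - α)^K * (t⁻¹ - α))
      (((K : ℝ) * (q/(C-σ) - α)^(K-1) * (q/(C-σ)^2)) * (σ⁻¹ - α)
        + (q/(C-σ) - α)^K * (-(σ^2)⁻¹)) σ := by
  have hden : HasDerivAt (fun t : ℝ => C - t) (-1) σ := by
    simpa using (hasDerivAt_id σ).const_sub C
  have hdiv : HasDerivAt (fun t : ℝ => q/(C - t)) (q/(C-σ)^2) σ := by
    have := (hasDerivAt_const σ q).div hden h2
    exact this.congr_deriv (by ring)
  have hpow := (hdiv.sub_const α).pow K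
  have hinv : HasDerivAt (fun t : ℝ => t⁻¹ - α) (-(σ^2)⁻¹) σ := by
    simpa using (hasDerivAt_inv h1).sub_const α
  exact hpow.mul hinv


set_option maxHeartbeats 1000000

/-- Section 5: minimization of `A/B = (n²/(x-y) - α)^(n²-2)·(1/(x+(n²-2)y) - α)` under
the positivity constraints of Lemma 1, with minimum `((n+1)/n - α)^(n²-1)` attained at
`x = n² - n`, `y = -(n² - n)/(n² - 1)`. -/
theorem optimal_povm_minimization
    (n : ℕ) (hn : 2 ≤ n) (α : ℝ) (hα0 : 0 ≤ α) (hα1 : α ≤ 1)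
    (x y : ℝ)
    (hxy : 0 < x - y)
    (hxy' : 0 < x + ((n : ℝ) ^ 2 - 2) * y)
    (hx : x ≤ (n : ℝ) ^ 2 - n)
    (hsum : ((n : ℝ) ^ 2 - 1) * (x + ((n : ℝ) ^ 2 - 2) * y) ≤ (n : ℝ) ^ 2 - n) :
    (((n : ℝ) + 1) / n - α) ^ (n ^ 2 - 1) ≤
      ((n : ℝ) ^ 2 / (x - y) - α) ^ (n ^ 2 - 2) *
        (1 / (x + ((n : ℝ) ^ 2 - 2) * y) - α) ∧
    (x = (n : ℝ) ^ 2 - n ∧ y = -((n : ℝ) ^ 2 - n) / ((n : ℝ) ^ 2 - 1) →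
      ((n : ℝ) ^ 2 / (x - y) - α) ^ (n ^ 2 - 2) *
        (1 / (x + ((n : ℝ) ^ 2 - 2) * y) - α) =
      (((n : ℝ) + 1) / n - α) ^ (n ^ 2 - 1)) := by
  have hr : (2:ℝ) ≤ (n:ℝ) := by exact_mod_cast hn
  set r : ℝ := (n:ℝ) with hrdef
  have hr0 : (0:ℝ) < r := by linarith
  have h21 : (0:ℝ) < r^2 - 1 := by nlinarith
  have h2r : (0:ℝ) < r^2 - r := by nlinarith
  have h22 : (0:ℝ) < r^2 - 2 := by nlinarith
  have hK4 : 4 ≤ n^2 := by calc 4 = 2^2 := rfl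
                               _ ≤ n^2 := Nat.pow_le_pow_left hn 2
  set K : ℕ := n^2 - 2 with hKdef
  have hKcast : ((K:ℕ):ℝ) = r^2 - 2 := by
    rw [hKdef, Nat.cast_sub (by omega : 2 ≤ n^2)]
    push_cast [hrdef]; ring
  set q : ℝ := r^2*(r^2-2) with hqdef
  set C : ℝ := (r^2-1)*(r^2-r) with hCdef
  have hqC : C < q := by rw [hqdef, hCdef]; nlinarith
  set s : ℝ := x + (r^2-2)*y with hsdef
  set d : ℝ := x - y with hddef
  have hs_pos : 0 < s := hxy'
  have hd_pos : 0 < d := hxy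
  set sstar : ℝ := (r^2-r)/(r^2-1) with hstardef
  have hs_star : s ≤ sstar := by
    rw [hstardef, le_div_iff₀ h21]; nlinarith [hsum]
  have hstar_pos : 0 < sstar := div_pos h2r h21
  have hstarC : sstar < C := by
    rw [hstardef, hCdef, div_lt_iff₀ h21]; nlinarith
  set M : ℝ := (r+1)/r with hMdef
  have hM1 : 1 < M := by rw [hMdef, lt_div_iff₀ hr0]; linarith
  have hm : 0 < M - α := by linarith
  set g : ℝ → ℝ := fun t => (q/(C - t) - α)^K * (t⁻¹ - α) with hgdef
  -- base positivity at any 0 < t ≤ sstar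
  have hbase : ∀ t : ℝ, 0 < t → t ≤ sstar → 0 < q/(C-t) - α := by
    intro t h0t hts
    have hCt : 0 < C - t := by linarith
    have : 1 < q/(C-t) := by
      rw [lt_div_iff₀ hCt]; nlinarith
    linarith
  -- antitone
  have hanti : AntitoneOn g (Set.Icc s sstar) := by
    apply antitoneOn_of_deriv_nonpos (convex_Icc _ _)
    · intro t ht
      have h0t : 0 < t := lt_of_lt_of_le hs_pos ht.1
      have hCt : 0 < C - t := by linarith [ht.2, hstarC]
      exact (hasDerivG q α C K t h0t.ne' hCt.ne').continuousAt.continuousWithinAt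
    · intro t ht
      rw [interior_Icc] at ht
      have h0t : 0 < t := lt_trans hs_pos ht.1
      have hCt : 0 < C - t := by linarith [ht.2, hstarC]
      exact ((hasDerivG q α C K t h0t.ne' hCt.ne').differentiableAt.differentiableWithinAt)
    · intro t ht
      rw [interior_Icc] at ht
      have h0t : 0 < t := lt_trans hs_pos ht.1
      have hts : t ≤ sstar := ht.2.le
      have hCt : 0 < C - t := by linarith [hstarC]
      rw [(hasDerivG q α C K t h0t.ne' hCt.ne').deriv]
      have hb := hbase t h0t hts
      have hP : q*((r^2-1)*t - (r^2-1)*(r^2-r))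
          + α*(((r^2-1)*(r^2-r) - t)^2 - r^2*(r^2-2)^2*t^2) ≤ 0 := by
        have hlin : (r^2-1)*t ≤ r^2 - r := by
          rw [hstardef, le_div_iff₀ h21] at hts; linarith [hts]
        have := keyP hr hα0 hα1 h0t.le hlin
        rw [hqdef]; linarith [this]
      have hBr : (r^2-2)*(q/(C-t)^2)*(t⁻¹-α) + (q/(C-t) - α)*(-(t^2)⁻¹)
          = (q*((r^2-1)*t - (r^2-1)*(r^2-r))
            + α*(((r^2-1)*(r^2-r) - t)^2 - r^2*(r^2-2)^2*t^2)) / (t^2*(C-t)^2) := by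
        have hCt' : C - t ≠ 0 := hCt.ne'
        have ht0 : t ≠ 0 := h0t.ne'
        rw [eq_div_iff (by positivity)]
        field_simp
        rw [hqdef, hCdef]; ring
      have hBr_le : (r^2-2)*(q/(C-t)^2)*(t⁻¹-α) + (q/(C-t) - α)*(-(t^2)⁻¹) ≤ 0 := by
        rw [hBr]
        apply div_nonpos_of_nonpos_of_nonneg hP
        positivity
      have hsplit : (q/(C-t) - α)^K = (q/(C-t) - α)^(K-1) * (q/(C-t) - α) := by
        conv_lhs => rw [show K = (K-1)+1 by omega]
        rw [pow_succ]
      calc ((K:ℝ) * (q/(C-t) - α)^(K-1) * (q/(C-t)^2)) * (t⁻¹ - α)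
            + (q/(C-t) - α)^K * (-(t^2)⁻¹)
          = (q/(C-t) - α)^(K-1) *
              ((r^2-2)*(q/(C-t)^2)*(t⁻¹-α) + (q/(C-t) - α)*(-(t^2)⁻¹)) := by
            rw [hsplit, hKcast]; ring
        _ ≤ 0 := mul_nonpos_of_nonneg_of_nonpos (pow_nonneg hb.le _) hBr_le
  -- value at sstar
  have hrne : r ≠ 0 := hr0.ne'
  have h21ne : r^2 - 1 ≠ 0 := h21.ne'
  have h2rne : r^2 - r ≠ 0 := h2r.ne'
  have h22ne : r^2 - 2 ≠ 0 := h22.ne'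
  have hCstar_pos : 0 < C - sstar := sub_pos.mpr hstarC
  have hq2 : q/(C - sstar) = M := by
    rw [hMdef, div_eq_div_iff hCstar_pos.ne' hrne, hqdef, hCdef, hstardef]
    field_simp
    ring
  have hq3 : sstar⁻¹ = M := by
    rw [hstardef, hMdef, inv_div, div_eq_div_iff h2rne hrne]
    ring
  have hgstar : g sstar = (M - α)^(K+1) := by
    rw [hgdef]; simp only []
    rw [hq2, hq3, pow_succ]
  -- chain
  have hCs : 0 < C - s := by linarith [hstarC]
  have hvM : M ≤ s⁻¹ := by
    rw [← hq3]; exact inv_anti₀ hs_pos hs_star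
  have hv : 0 < s⁻¹ - α := by linarith
  have hbs := hbase s hs_pos hs_star
  have hid5 : (r^2-2)*d + s = (r^2-1)*x := by rw [hsdef, hddef]; ring
  have hbase_le : q/(C-s) ≤ r^2/d := by
    rw [div_le_div_iff₀ hCs hd_pos, hqdef, hCdef]
    have hxC : (r^2-1)*x ≤ (r^2-1)*(r^2-r) := mul_le_mul_of_nonneg_left hx h21.le
    nlinarith [hxC, hid5, sq_nonneg r]
  have hgs_le : g s ≤ (r^2/d - α)^K * (s⁻¹ - α) := by
    rw [hgdef]
    exact mul_le_mul_of_nonneg_right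
      (pow_le_pow_left₀ hbs.le (by linarith [hbase_le]) K) hv.le
  have hmono : g sstar ≤ g s :=
    hanti ⟨le_refl s, hs_star⟩ ⟨hs_star, le_refl sstar⟩ hs_star
  constructor
  · have e1 : (((n:ℝ)+1)/(n:ℝ) - α) ^ (n^2-1) = (M - α)^(K+1) := by
      rw [hMdef, hrdef]; congr 1; omega
    rw [e1, one_div]
    calc (M - α)^(K+1) = g sstar := hgstar.symm
      _ ≤ g s := hmono
      _ ≤ (r^2/d - α)^K * (s⁻¹ - α) := hgs_le
  · rintro ⟨hx', hy'⟩
    have h1 : x - y = (r^2-r)*r^2/(r^2-1) := by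
      rw [hx', hy']; field_simp; ring
    have h2 : x + (r^2-2)*y = (r^2-r)/(r^2-1) := by
      rw [hx', hy']; field_simp; ring
    have h3 : r^2/(x-y) = M := by
      have hne : (r^2-r)*r^2/(r^2-1) ≠ 0 :=
        ne_of_gt (div_pos (mul_pos h2r (by positivity)) h21)
      rw [h1, hMdef, div_eq_div_iff hne hrne]
      field_simp
      ring
    have h4 : 1/(x + (r^2-2)*y) = M := by
      rw [h2, hMdef, one_div, inv_div, div_eq_div_iff h2rne hrne]; ring
    rw [h3, h4, ← pow_succ]
    rw [hMdef, hrdef]; congr 1; omega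
end
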